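/- Let G be a (K5-e)-free graph containing a triangle on vertices v1, v2, v3, and let Z be the set of vertices outside the triangle adjacent to all of v1, v2, v3. Then every vertex x outside the triangle whose only neighbor among {v1,v2,v3} is some single vi has at most one neighbor in Z. -/

import Mathlib

open SimpleGraph

/-- The complete graph on 5 vertices minus one edge. -/
def K5e : SimpleGraph (Fin 5) := (⊤ : SimpleGraph (Fin 5)).deleteEdges {s(0, 1)}

/-- `H` has an induced copy in `G`. -/
def HasInducedCopy {W V : Type*} (H : SimpleGraph W) (G : SimpleGraph V) : Prop :=
  ∃ f : W ↪ V, ∀ a b : W, G.Adj (f a) (f b) ↔ H.Adj a b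

/-- `G` contains no induced subgraph isomorphic to `H`. -/
def IsInducedFree {V W : Type*} (G : SimpleGraph V) (H : SimpleGraph W) : Prop :=
  ¬ HasInducedCopy H G

lemma k5e_key {V : Type*} (G : SimpleGraph V) (hG : IsInducedFree G K5e)
    (vi vj vk x z z' : V)
    (tij : G.Adj vi vj) (tik : G.Adj vi vk) (tjk : G.Adj vj vk)
    (hxvi : G.Adj x vi) (hxvj : ¬ G.Adj x vj) (hxvk : ¬ G.Adj x vk)
    (hxj : x ≠ vj)
    (hzi : G.Adj z vi) (hzj : G.Adj z vj) (hzk : G.Adj z vk)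
    (hz'i : G.Adj z' vi) (hz'j : G.Adj z' vj) (hz'k : G.Adj z' vk)
    (hxz : G.Adj x z) (hxz' : G.Adj x z') (hne : z ≠ z') : False := by
  apply hG
  have h1 := hxz.ne
  have h2 := hxz'.ne
  have h3 := hzi.ne
  have h4 := hz'i.ne
  have h5 := hzj.ne
  have h6 := hz'j.ne
  have h7 := hzk.ne
  have h8 := hz'k.ne
  have h9 := hxvi.ne
  have h10 := tij.ne
  have h11 := tik.ne
  have h12' := tjk.ne
  have s1 := hxz.symm; have s2 := hxz'.symm; have s3 := hzi.symm
  have s4 := hz'i.symm; have s5 := hzj.symm; have s6 := hz'j.symm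
  have s7 := hzk.symm; have s8 := hz'k.symm; have s9 := hxvi.symm
  have s10 := tij.symm; have s11 := tik.symm; have s12 := tjk.symm
  have n1 : ¬ G.Adj vj x := fun hh => hxvj hh.symm
  have n2 : ¬ G.Adj vk x := fun hh => hxvk hh.symm
  by_cases h : G.Adj z z'
  · have hs := h.symm
    refine ⟨⟨![x, vj, z, z', vi], ?_⟩, ?_⟩
    · intro a b hab
      fin_cases a <;> fin_cases b <;> simp_all
    · intro a b
      change G.Adj (![x, vj, z, z', vi] a) (![x, vj, z, z', vi] b) ↔ _
      fin_cases a <;> fin_cases b <;>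
        simp_all [K5e, G.irrefl, hne.symm, Ne.symm]
  · have hn : ¬ G.Adj z' z := fun hh => h hh.symm
    refine ⟨⟨![z, z', vi, vj, vk], ?_⟩, ?_⟩
    · intro a b hab
      fin_cases a <;> fin_cases b <;> simp_all
    · intro a b
      change G.Adj (![z, z', vi, vj, vk] a) (![z, z', vi, vj, vk] b) ↔ _
      fin_cases a <;> fin_cases b <;>
        simp_all [K5e, G.irrefl, hne.symm, Ne.symm]

theorem stmt_6 {V : Type*} (G : SimpleGraph V) (hG : IsInducedFree G K5e)
    (v1 v2 v3 : V) (h12 : G.Adj v1 v2) (h13 : G.Adj v1 v3) (h23 : G.Adj v2 v3)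
    (Z : Set V)
    (hZ : Z = {u | u ∉ ({v1, v2, v3} : Set V) ∧ G.Adj u v1 ∧ G.Adj u v2 ∧ G.Adj u v3})
    (x : V) (hx : x ∉ ({v1, v2, v3} : Set V))
    (hx1 : (G.Adj x v1 ∧ ¬ G.Adj x v2 ∧ ¬ G.Adj x v3) ∨
           (¬ G.Adj x v1 ∧ G.Adj x v2 ∧ ¬ G.Adj x v3) ∨
           (¬ G.Adj x v1 ∧ ¬ G.Adj x v2 ∧ G.Adj x v3)) :
    ∀ z ∈ Z, ∀ z' ∈ Z, G.Adj x z → G.Adj x z' → z = z' := by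
  subst hZ
  intro z hz z' hz' hxz hxz'
  by_contra hne
  obtain ⟨-, hz1, hz2, hz3⟩ := hz
  obtain ⟨-, hz'1, hz'2, hz'3⟩ := hz'
  simp only [Set.mem_insert_iff, Set.mem_singleton_iff, not_or] at hx
  obtain ⟨hx1', hx2', hx3'⟩ := hx
  rcases hx1 with ⟨a1, a2, a3⟩ | ⟨a1, a2, a3⟩ | ⟨a1, a2, a3⟩
  · exact k5e_key G hG v1 v2 v3 x z z' h12 h13 h23 a1 a2 a3 hx2'
      hz1 hz2 hz3 hz'1 hz'2 hz'3 hxz hxz' hne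
  · exact k5e_key G hG v2 v1 v3 x z z' h12.symm h23 h13 a2 a1 a3 hx1'
      hz2 hz1 hz3 hz'2 hz'1 hz'3 hxz hxz' hne
  · exact k5e_key G hG v3 v1 v2 x z z' h13.symm h23.symm h12 a3 a1 a2 hx1'
      hz3 hz1 hz2 hz'3 hz'1 hz'2 hxz hxz' hne
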